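/- Let Θ be the characteristics of the kinetic Kuramoto model for identical oscillators with initial measure ρ₀, and suppose the solution is not stationary. Then z(t) ≠ 0 for all t > 0, R(t) converges to some R* ∈ (0,1], and φ(t) converges as t → ∞: there exists φ* ∈ ℝ such that z(t)/|z(t)| → e^{iφ*}. -/

import Mathlib

open MeasureTheory Filter Real Set

namespace KuramotoAux

lemma abs_exp_I_mul (a : ℝ) : ‖Complex.exp (Complex.I * (a:ℂ))‖ = 1 := by
  rw [mul_comm]; exact Complex.norm_exp_ofReal_mul_I a

lemma exp_I_lipschitz (a b : ℝ) :
    ‖Complex.exp (Complex.I * (a:ℂ)) - Complex.exp (Complex.I * (b:ℂ))‖ ≤ |a - b| := by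
  have hlip : LipschitzWith 1 (fun x : ℝ => Complex.exp (Complex.I * (x:ℂ))) := by
    have hd : ∀ x : ℝ, HasDerivAt (fun x : ℝ => Complex.exp (Complex.I * (x:ℂ)))
        (Complex.exp (Complex.I * (x:ℂ)) * Complex.I) x := by
      intro x
      have h1 : HasDerivAt (fun x : ℝ => ((x:ℝ):ℂ)) 1 x := by
        simpa using (hasDerivAt_id x).ofReal_comp
      have h2 : HasDerivAt (fun x : ℝ => Complex.I * ((x:ℝ):ℂ)) (Complex.I) x := by
        simpa using h1.const_mul Complex.I
      simpa using h2.cexp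
    apply lipschitzWith_of_nnnorm_deriv_le (fun x => (hd x).differentiableAt)
    intro x
    rw [(hd x).deriv]
    simp only [← NNReal.coe_le_coe, coe_nnnorm, norm_mul, Complex.norm_I,
      NNReal.coe_one]
    rw [abs_exp_I_mul]; norm_num
  have := hlip.dist_le_mul a b
  simpa [Complex.dist_eq, Real.dist_eq] using this

lemma abs_cos_int_mul_pi (k : ℤ) : |Real.cos (k*π)| = 1 := by
  have hpyt := Real.sin_sq_add_cos_sq ((k:ℝ)*π)
  rw [Real.sin_int_mul_pi] at hpyt
  have h1 : Real.cos ((k:ℝ)*π)^2 = 1 := by nlinarith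
  have h0 : (Real.cos ((k:ℝ)*π) - 1) * (Real.cos ((k:ℝ)*π) + 1) = 0 := by linear_combination h1
  rcases mul_eq_zero.mp h0 with h | h
  · rw [sub_eq_zero.mp h]; norm_num
  · have : Real.cos ((k:ℝ)*π) = -1 := by linarith
    rw [this]; norm_num

/-- Trapping lemma: a continuous function whose sine tends to zero converges. -/
lemma tendsto_of_sin_tendsto {g : ℝ → ℝ} (hg : ContinuousOn g (Ici 0))
    (hsin : Tendsto (fun t => Real.sin (g t)) atTop (nhds 0)) :
    ∃ L : ℝ, Tendsto g atTop (nhds L) := by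
  have h2 : ∀ᶠ t in atTop, |Real.sin (g t)| ≤ 1/2 := by
    have := hsin (Metric.closedBall_mem_nhds 0 (by norm_num : (0:ℝ) < 1/2))
    simpa [Metric.mem_closedBall, Real.dist_eq] using this
  obtain ⟨T₀, hT₀⟩ := h2.exists_forall_of_atTop
  set T : ℝ := max T₀ 0 with hTdef
  have hT : ∀ t ≥ T, |Real.sin (g t)| ≤ 1/2 := fun t ht => hT₀ t (le_trans (le_max_left _ _) ht)
  have hT0 : (0:ℝ) ≤ T := le_max_right _ _
  set k : ℤ := round (g T / π) with hk
  have hpi : (0:ℝ) < π := Real.pi_pos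
  have hbase : |g T - k * π| ≤ π/2 := by
    have h := abs_sub_round (g T / π)
    have heq : g T - k*π = (g T/π - k) * π := by field_simp
    rw [heq, abs_mul, abs_of_pos hpi]
    calc |g T/π - (k:ℝ)| * π ≤ (1/2) * π := mul_le_mul_of_nonneg_right h hpi.le
      _ = π/2 := by ring
  have habs1 : ∀ x : ℝ, |x - k*π| = π/2 → |Real.sin x| = 1 := by
    intro x hx
    rcases (abs_eq (by positivity : (0:ℝ) ≤ π/2)).mp hx with h | h
    · have hx' : x = k*π + π/2 := by linarith
      rw [hx', Real.sin_add, Real.sin_int_mul_pi, Real.sin_pi_div_two, Real.cos_pi_div_two]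
      simpa using abs_cos_int_mul_pi k
    · have hx' : x = k*π - π/2 := by linarith
      rw [hx', Real.sin_sub, Real.sin_int_mul_pi, Real.sin_pi_div_two, Real.cos_pi_div_two]
      simpa using abs_cos_int_mul_pi k
  -- g T is strictly inside
  have hbase' : |g T - k*π| < π/2 := by
    rcases lt_or_eq_of_le hbase with h | h
    · exact h
    · exfalso; have := habs1 (g T) h; have := hT T le_rfl; linarith
  have htrap : ∀ t ≥ T, |g t - k*π| < π/2 := by
    intro t ht
    by_contra hcon
    push_neg at hcon
    have hcont : ContinuousOn (fun s => |g s - k*π|) (Icc T t) := by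
      apply ContinuousOn.abs
      exact ((hg.mono (fun s hs => le_trans hT0 hs.1)).sub continuousOn_const)
    have hmem : π/2 ∈ Icc (|g T - k*π|) (|g t - k*π|) := ⟨hbase'.le, hcon⟩
    obtain ⟨s, hs, hs2⟩ := intermediate_value_Icc ht hcont hmem
    have h1 : |Real.sin (g s)| = 1 := habs1 (g s) hs2
    have h2' : |Real.sin (g s)| ≤ 1/2 := hT s hs.1
    linarith
  -- convergence: g t - kπ = arcsin (sin (g t) * cos (kπ)) for t ≥ T
  have hsin2 : Tendsto (fun t => Real.sin (g t) * Real.cos (k*π)) atTop (nhds 0) := by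
    simpa using hsin.mul_const (Real.cos (k*π))
  have harc : Tendsto (fun t => Real.arcsin (Real.sin (g t) * Real.cos (k*π))) atTop
      (nhds 0) := by
    have := (Real.continuous_arcsin.continuousAt (x := (0:ℝ))).tendsto
    rw [Real.arcsin_zero] at this
    exact this.comp hsin2
  have heqv : ∀ᶠ t in atTop, Real.arcsin (Real.sin (g t) * Real.cos (k*π)) = g t - k*π := by
    filter_upwards [eventually_ge_atTop T] with t ht
    have h1 : |g t - k*π| < π/2 := htrap t ht
    have h2' : Real.sin (g t - k*π) = Real.sin (g t) * Real.cos (k*π) := by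
      rw [Real.sin_sub, Real.sin_int_mul_pi]; ring
    rw [← h2', Real.arcsin_sin (by cases abs_lt.mp h1; linarith) (by cases abs_lt.mp h1; linarith)]
  have : Tendsto (fun t => g t - k*π) atTop (nhds 0) := harc.congr' heqv
  refine ⟨k*π, ?_⟩
  have := this.add_const (k*π)
  simpa using this

/-- A square-integrable Lipschitz function tends to zero at infinity. -/
lemma tendsto_zero_of_sq_integrable_of_lip {g : ℝ → ℝ}
    (hlip : ∀ s ∈ Ici (0:ℝ), ∀ t ∈ Ici (0:ℝ), |g t - g s| ≤ 2 * |t - s|)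
    (hint : IntegrableOn (fun t => (g t)^2) (Ioi 1) (volume : Measure ℝ)) :
    Tendsto g atTop (nhds 0) := by
  rw [Metric.tendsto_atTop]
  intro ε hε
  set S : ℝ := ∫ t in Ioi (1:ℝ), (g t)^2 with hS
  have hnn : ∀ t, 0 ≤ (g t)^2 := fun t => sq_nonneg _
  have htend : Tendsto (fun B => ∫ t in (1:ℝ)..B, (g t)^2) atTop (nhds S) :=
    intervalIntegral_tendsto_integral_Ioi 1 hint tendsto_id
  have hc : (0:ℝ) < ε^3/256 := by positivity
  obtain ⟨A, hA⟩ := ((htend.eventually (eventually_gt_nhds (by linarith : S - ε^3/256 < S))).and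
    (eventually_ge_atTop (2:ℝ))).exists_forall_of_atTop
  have hA2 : (2:ℝ) ≤ A := (hA A le_rfl).2
  have hAgt : S - ε^3/256 < ∫ t in (1:ℝ)..A, (g t)^2 := (hA A le_rfl).1
  refine ⟨A, fun t ht => ?_⟩
  rw [Real.dist_eq, sub_zero]
  by_contra hcon
  push_neg at hcon
  set B : ℝ := t + ε/8 with hB
  have h1A : (1:ℝ) ≤ A := by linarith
  have htpos : (0:ℝ) ≤ t := by linarith
  have h8 : (0:ℝ) < ε/8 := by positivity
  have hAB : A ≤ B := by rw [hB]; linarith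
  have htB : t ≤ B := by rw [hB]; linarith
  -- pointwise lower bound on Ioc t B
  have hptw : ∀ s ∈ Ioc t B, (ε^2/4 : ℝ) ≤ (g s)^2 := by
    intro s hs
    have hs0 : s ∈ Ici (0:ℝ) := le_trans htpos hs.1.le
    have hd : |g s - g t| ≤ 2 * |s - t| := hlip t (mem_Ici.mpr htpos) s hs0
    have h1 : |s - t| ≤ ε/8 := by
      rw [abs_of_nonneg (by linarith [hs.1.le] : (0:ℝ) ≤ s - t)]
      have := hs.2; rw [hB] at this; linarith
    have h2 : |g s| ≥ 3*ε/4 := by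
      have := abs_sub_abs_le_abs_sub (g t) (g s)
      rw [abs_sub_comm (g t) (g s)] at this
      have h3 : |g t| - |g s| ≤ 2 * (ε/8) := le_trans this (le_trans hd (by linarith))
      linarith
    calc (ε^2/4 : ℝ) ≤ (3*ε/4)^2 := by nlinarith
      _ ≤ |g s|^2 := by nlinarith [abs_nonneg (g s)]
      _ = (g s)^2 := sq_abs _
  -- lower bound for the integral over Ioc t B
  have hsubIoi : Ioc t B ⊆ Ioi (1:ℝ) := fun s hs => lt_of_lt_of_le (by linarith) hs.1.le
  have hintloc : IntegrableOn (fun s => (g s)^2) (Ioc t B) volume := hint.mono_set hsubIoi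
  have hlow : ε^3/32 ≤ ∫ s in Ioc t B, (g s)^2 := by
    have hconst : ∫ s in Ioc t B, (ε^2/4:ℝ) = ε^3/32 := by
      rw [setIntegral_const, Real.volume_real_Ioc_of_le htB, smul_eq_mul]
      rw [hB]; ring
    rw [← hconst]
    exact setIntegral_mono_on (integrableOn_const (by
      rw [Real.volume_Ioc]; exact ENNReal.ofReal_ne_top)) hintloc measurableSet_Ioc hptw
  -- upper bound: tail is small
  have hsplit : ∫ s in Ioc 1 B, (g s)^2 = (∫ s in Ioc 1 A, (g s)^2) + ∫ s in Ioc A B, (g s)^2 := by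
    rw [← Set.Ioc_union_Ioc_eq_Ioc h1A hAB]
    exact setIntegral_union (Set.Ioc_disjoint_Ioc_of_le le_rfl) measurableSet_Ioc
      (hint.mono_set Set.Ioc_subset_Ioi_self)
      (hint.mono_set (fun s hs => lt_of_lt_of_le (by linarith) hs.1.le))
  have hle_S : ∫ s in Ioc 1 B, (g s)^2 ≤ S := by
    apply setIntegral_mono_set hint (ae_of_all _ hnn)
    exact HasSubset.Subset.eventuallyLE Set.Ioc_subset_Ioi_self
  have h1B : (1:ℝ) ≤ B := by linarith
  have hIocB : ∫ s in (1:ℝ)..B, (g s)^2 = ∫ s in Ioc 1 B, (g s)^2 :=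
    intervalIntegral.integral_of_le h1B
  have hIocA : ∫ s in (1:ℝ)..A, (g s)^2 = ∫ s in Ioc 1 A, (g s)^2 :=
    intervalIntegral.integral_of_le h1A
  have htail : ∫ s in Ioc A B, (g s)^2 < ε^3/256 := by
    have := hle_S
    rw [hsplit] at this
    rw [hIocA] at hAgt
    linarith
  have hmono2 : ∫ s in Ioc t B, (g s)^2 ≤ ∫ s in Ioc A B, (g s)^2 := by
    apply setIntegral_mono_set (hint.mono_set (fun s hs => lt_of_lt_of_le (by linarith) hs.1.le))
      (ae_of_all _ hnn)
    exact HasSubset.Subset.eventuallyLE (Set.Ioc_subset_Ioc_left (by linarith))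
  nlinarith [hlow, hmono2, htail]

lemma sin_identity (A B : ℝ) (u : ℂ) :
    Real.sin (A - B) * Complex.normSq u =
    (-(Complex.exp (Complex.I*(B:ℂ)) * (starRingEnd ℂ) u).im)
      * (Complex.exp (Complex.I*(A:ℂ)) * (starRingEnd ℂ) u).re
    - (-(Complex.exp (Complex.I*(A:ℂ)) * (starRingEnd ℂ) u).im)
      * (Complex.exp (Complex.I*(B:ℂ)) * (starRingEnd ℂ) u).re := by
  rw [mul_comm Complex.I (A:ℂ), mul_comm Complex.I (B:ℂ)]
  simp only [Complex.mul_re, Complex.mul_im, Complex.exp_ofReal_mul_I_re,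
    Complex.exp_ofReal_mul_I_im, Complex.conj_re, Complex.conj_im, Complex.normSq_apply,
    Real.sin_sub]
  ring


section Main

variable {ρ₀ : Measure ℝ} [IsProbabilityMeasure ρ₀] {Θ : ℝ → ℝ → ℝ} {z : ℝ → ℂ}

/-- The velocity field along characteristics. -/
noncomputable def V (Θ : ℝ → ℝ → ℝ) (z : ℝ → ℂ) (t θ : ℝ) : ℝ :=
  -(Complex.exp (Complex.I * (Θ t θ : ℂ)) * (starRingEnd ℂ) (z t)).im

lemma zabs_le (hz : ∀ t, z t = ∫ θ, Complex.exp (Complex.I * (Θ t θ : ℂ)) ∂ρ₀) (t : ℝ) :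
    ‖z t‖ ≤ 1 := by
  rw [hz]
  calc ‖∫ θ, Complex.exp (Complex.I * (Θ t θ : ℂ)) ∂ρ₀‖
      = ‖∫ θ, Complex.exp (Complex.I * (Θ t θ : ℂ)) ∂ρ₀‖ := rfl
    _ ≤ ∫ θ, ‖Complex.exp (Complex.I * (Θ t θ : ℂ))‖ ∂ρ₀ := norm_integral_le_integral_norm _
    _ = ∫ (_ : ℝ), (1:ℝ) ∂ρ₀ := by
        congr 1; funext θ; rw [abs_exp_I_mul]
    _ = 1 := by simp

lemma V_bound (t θ : ℝ) : |V Θ z t θ| ≤ ‖z t‖ := by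
  unfold V
  rw [abs_neg]
  calc |(Complex.exp (Complex.I * (Θ t θ:ℂ)) * (starRingEnd ℂ) (z t)).im|
      ≤ ‖Complex.exp (Complex.I * (Θ t θ:ℂ)) * (starRingEnd ℂ) (z t)‖ :=
        Complex.abs_im_le_norm _
    _ = ‖z t‖ := by
        rw [norm_mul, abs_exp_I_mul, Complex.norm_conj, one_mul]

/-- Lipschitz property of the velocity field in the phase variable. -/
lemma V_lip (t a b : ℝ) :
    |(-(Complex.exp (Complex.I * (a:ℂ)) * (starRingEnd ℂ) (z t)).im) -
     (-(Complex.exp (Complex.I * (b:ℂ)) * (starRingEnd ℂ) (z t)).im)|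
      ≤ ‖z t‖ * |a - b| := by
  have h1 : (-(Complex.exp (Complex.I * (a:ℂ)) * (starRingEnd ℂ) (z t)).im) -
      (-(Complex.exp (Complex.I * (b:ℂ)) * (starRingEnd ℂ) (z t)).im)
      = -(((Complex.exp (Complex.I * (a:ℂ)) - Complex.exp (Complex.I * (b:ℂ)))
          * (starRingEnd ℂ) (z t)).im) := by
    rw [sub_mul, Complex.sub_im]; ring
  rw [h1, abs_neg]
  calc |(((Complex.exp (Complex.I * (a:ℂ)) - Complex.exp (Complex.I * (b:ℂ)))
          * (starRingEnd ℂ) (z t)).im)|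
      ≤ ‖(Complex.exp (Complex.I * (a:ℂ)) - Complex.exp (Complex.I * (b:ℂ)))
          * (starRingEnd ℂ) (z t)‖ := Complex.abs_im_le_norm _
    _ = ‖Complex.exp (Complex.I * (a:ℂ)) - Complex.exp (Complex.I * (b:ℂ))‖
          * ‖z t‖ := by rw [norm_mul, Complex.norm_conj]
    _ ≤ |a - b| * ‖z t‖ :=
        mul_le_mul_of_nonneg_right (exp_I_lipschitz a b) (norm_nonneg _)
    _ = ‖z t‖ * |a - b| := mul_comm _ _


section ODE

variable (hz : ∀ t, z t = ∫ θ, Complex.exp (Complex.I * (Θ t θ : ℂ)) ∂ρ₀)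
  (hinit : ∀ θ, Θ 0 θ = θ)
  (hode : ∀ θ : ℝ, ∀ t ≥ (0:ℝ),
      HasDerivAt (fun s => Θ s θ)
        (-(Complex.exp (Complex.I * (Θ t θ : ℂ)) * (starRingEnd ℂ) (z t)).im) t)

include hode

lemma hodeV : ∀ θ : ℝ, ∀ t ≥ (0:ℝ), HasDerivAt (fun s => Θ s θ) (V Θ z t θ) t := hode

include hz
include hinit

/-- Upper Grönwall estimate between two characteristics. -/
lemma theta_dist_le (θ θ' : ℝ) {s t : ℝ} (hs : 0 ≤ s) (hst : s ≤ t) :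
    |Θ t θ - Θ t θ'| ≤ Real.exp (t - s) * |Θ s θ - Θ s θ'| := by
  have key := norm_le_gronwallBound_of_norm_deriv_right_le
    (f := fun τ => Θ τ θ - Θ τ θ') (f' := fun τ => V Θ z τ θ - V Θ z τ θ')
    (δ := |Θ s θ - Θ s θ'|) (K := 1) (ε := 0) (a := s) (b := t)
    (fun τ hτ => (((hode θ τ (le_trans hs hτ.1)).sub
      (hode θ' τ (le_trans hs hτ.1))).continuousAt).continuousWithinAt)
    (fun τ hτ => (((hode θ τ (le_trans hs hτ.1)).sub
      (hode θ' τ (le_trans hs hτ.1)))).hasDerivWithinAt)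
    (le_refl _)
    (fun τ hτ => by
      have h1 := V_lip (z := z) τ (Θ τ θ) (Θ τ θ')
      have h2 := zabs_le (Θ := Θ) hz τ
      have h3 : ‖z τ‖ * |Θ τ θ - Θ τ θ'| ≤ 1 * |Θ τ θ - Θ τ θ'| :=
        mul_le_mul_of_nonneg_right h2 (abs_nonneg _)
      calc ‖V Θ z τ θ - V Θ z τ θ'‖ ≤ ‖z τ‖ * |Θ τ θ - Θ τ θ'| := h1
        _ ≤ 1 * |Θ τ θ - Θ τ θ'| := h3
        _ = 1 * ‖(fun τ => Θ τ θ - Θ τ θ') τ‖ + 0 := by simp [Real.norm_eq_abs]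
        )
  have := key t ⟨hst, le_refl t⟩
  rw [Real.norm_eq_abs, gronwallBound_ε0] at this
  simp only [one_mul] at this
  rw [mul_comm]
  exact this

/-- Characteristics are `1`-Lipschitz in time. -/
lemma theta_time_lip (θ : ℝ) {s t : ℝ} (hs : 0 ≤ s) (hst : s ≤ t) :
    |Θ t θ - Θ s θ| ≤ t - s := by
  have key := norm_le_gronwallBound_of_norm_deriv_right_le
    (f := fun τ => Θ τ θ - Θ s θ) (f' := fun τ => V Θ z τ θ)
    (δ := 0) (K := 0) (ε := 1) (a := s) (b := t)
    (fun τ hτ => (((hode θ τ (le_trans hs hτ.1)).sub_const _).continuousAt).continuousWithinAt)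
    (fun τ hτ => ((hode θ τ (le_trans hs hτ.1)).sub_const _).hasDerivWithinAt)
    (by simp)
    (fun τ hτ => by
      have h1 := V_bound (Θ := Θ) (z := z) τ θ
      have h2 := zabs_le (Θ := Θ) hz τ
      calc ‖V Θ z τ θ‖ ≤ ‖z τ‖ := h1
        _ ≤ 1 := h2
        _ = 0 * ‖(fun τ => Θ τ θ - Θ s θ) τ‖ + 1 := by simp)
  have := key t ⟨hst, le_refl t⟩
  rw [Real.norm_eq_abs, gronwallBound_K0] at this
  simpa using this

/-- Reverse Grönwall estimate (uniqueness backwards in time). -/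
lemma theta_dist_ge (θ θ' : ℝ) {s : ℝ} (hs : 0 ≤ s) :
    |θ - θ'| ≤ Real.exp s * |Θ s θ - Θ s θ'| := by
  have key := norm_le_gronwallBound_of_norm_deriv_right_le
    (f := fun τ => Θ (s - τ) θ - Θ (s - τ) θ')
    (f' := fun τ => (V Θ z (s - τ) θ) * (-1) - (V Θ z (s - τ) θ') * (-1))
    (δ := |Θ s θ - Θ s θ'|) (K := 1) (ε := 0) (a := 0) (b := s)
    ?_ ?_ (by simp) ?_
  · have := key s ⟨hs, le_refl s⟩
    rw [Real.norm_eq_abs, gronwallBound_ε0, sub_zero] at this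
    simp only [one_mul, sub_self, hinit] at this
    rw [mul_comm]
    exact this
  · intro τ hτ
    have hsτ : 0 ≤ s - τ := by have := hτ.2; linarith [hτ.1]
    have hinner : HasDerivAt (fun τ : ℝ => s - τ) (-1) τ := by
      simpa using (hasDerivAt_id τ).const_sub s
    exact ((((hode θ (s - τ) hsτ).comp τ hinner).sub
      (((hode θ' (s - τ) hsτ).comp τ hinner))).continuousAt).continuousWithinAt
  · intro τ hτ
    have hsτ : 0 ≤ s - τ := by have := hτ.2; linarith [hτ.1]
    have hinner : HasDerivAt (fun τ : ℝ => s - τ) (-1) τ := by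
      simpa using (hasDerivAt_id τ).const_sub s
    exact (((hode θ (s - τ) hsτ).comp τ hinner).sub
      (((hode θ' (s - τ) hsτ).comp τ hinner))).hasDerivWithinAt
  · intro τ hτ
    have hsτ : 0 ≤ s - τ := by have := hτ.2; linarith [hτ.1]
    have h1 := V_lip (z := z) (s - τ) (Θ (s - τ) θ) (Θ (s - τ) θ')
    have h2 := zabs_le (Θ := Θ) hz (s - τ)
    have h3 : ‖z (s-τ)‖ * |Θ (s-τ) θ - Θ (s-τ) θ'| ≤ 1 * |Θ (s-τ) θ - Θ (s-τ) θ'| :=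
      mul_le_mul_of_nonneg_right h2 (abs_nonneg _)
    have h4 : ‖(V Θ z (s - τ) θ) * (-1) - (V Θ z (s - τ) θ') * (-1)‖
        = ‖V Θ z (s - τ) θ - V Θ z (s - τ) θ'‖ := by
      rw [Real.norm_eq_abs, Real.norm_eq_abs]
      rw [show (V Θ z (s - τ) θ) * (-1) - (V Θ z (s - τ) θ') * (-1)
        = -((V Θ z (s - τ) θ) - (V Θ z (s - τ) θ')) by ring, abs_neg]
    rw [h4]
    calc ‖V Θ z (s-τ) θ - V Θ z (s-τ) θ'‖ ≤ ‖z (s-τ)‖ * |Θ (s-τ) θ - Θ (s-τ) θ'| := h1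
      _ ≤ 1 * |Θ (s-τ) θ - Θ (s-τ) θ'| := h3
      _ = 1 * ‖(fun τ => Θ (s-τ) θ - Θ (s-τ) θ') τ‖ + 0 := by simp [Real.norm_eq_abs]


/-- Characteristics preserve strict order. -/
lemma theta_strict_mono {θ θ' : ℝ} (hlt : θ < θ') {t : ℝ} (ht : 0 ≤ t) :
    Θ t θ < Θ t θ' := by
  set u : ℝ → ℝ := fun τ => Θ τ θ' - Θ τ θ with hu
  have hne : ∀ τ ∈ Icc 0 t, u τ ≠ 0 := by
    intro τ hτ h0
    have := theta_dist_ge (Θ := Θ) (z := z) hz hinit hode θ' θ hτ.1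
    rw [show Θ τ θ' - Θ τ θ = u τ from rfl, h0] at this
    simp only [abs_zero, mul_zero] at this
    have : θ' = θ := by
      have := abs_nonpos_iff.mp this; linarith [sub_eq_zero.mp this]
    linarith
  have hu0 : 0 < u 0 := by simp [hu, hinit]; linarith
  by_contra hcon
  push_neg at hcon
  have hut : u t ≤ 0 := by simp [hu]; linarith
  have hcont : ContinuousOn u (Icc 0 t) := fun τ hτ =>
    (((hode θ' τ hτ.1).sub (hode θ τ hτ.1)).continuousAt).continuousWithinAt
  obtain ⟨s, hs, hs0⟩ := intermediate_value_Icc' ht hcont ⟨hut, hu0.le⟩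
  exact hne s hs hs0

/-- Characteristics commute with the `2π` shift. -/
lemma theta_periodic (θ : ℝ) {t : ℝ} (ht : 0 ≤ t) :
    Θ t (θ + 2*π) = Θ t θ + 2*π := by
  have hexp : ∀ x : ℝ, Complex.exp (Complex.I * ((x + 2*π : ℝ):ℂ))
      = Complex.exp (Complex.I * (x:ℂ)) := by
    intro x
    rw [Complex.ofReal_add, mul_add, Complex.exp_add]
    have h2 : Complex.I * ((2*π:ℝ):ℂ) = 2*π*Complex.I := by push_cast; ring
    rw [h2, Complex.exp_two_pi_mul_I, mul_one]
  have key := norm_le_gronwallBound_of_norm_deriv_right_le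
    (f := fun τ => Θ τ (θ + 2*π) - (Θ τ θ + 2*π))
    (f' := fun τ => V Θ z τ (θ + 2*π) - V Θ z τ θ)
    (δ := 0) (K := 1) (ε := 0) (a := 0) (b := t)
    (fun τ hτ => (((hode (θ + 2*π) τ hτ.1).sub
      ((hode θ τ hτ.1).add_const _)).continuousAt).continuousWithinAt)
    (fun τ hτ => ((hode (θ + 2*π) τ hτ.1).sub
      ((hode θ τ hτ.1).add_const _)).hasDerivWithinAt)
    (by simp [hinit])
    (fun τ hτ => by
      have hVθ : V Θ z τ θ = -(Complex.exp (Complex.I * ((Θ τ θ + 2*π : ℝ):ℂ))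
          * (starRingEnd ℂ) (z τ)).im := by
        unfold V; rw [hexp]
      rw [show ‖V Θ z τ (θ+2*π) - V Θ z τ θ‖ = |V Θ z τ (θ+2*π) - V Θ z τ θ| from rfl, hVθ]
      have h1 := V_lip (z := z) τ (Θ τ (θ + 2*π)) (Θ τ θ + 2*π)
      have h2 := zabs_le (Θ := Θ) hz τ
      calc |(-(Complex.exp (Complex.I * ((Θ τ (θ+2*π) : ℝ):ℂ)) * (starRingEnd ℂ) (z τ)).im) -
          (-(Complex.exp (Complex.I * ((Θ τ θ + 2*π : ℝ):ℂ)) * (starRingEnd ℂ) (z τ)).im)|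
          ≤ ‖z τ‖ * |Θ τ (θ+2*π) - (Θ τ θ + 2*π)| := h1
        _ ≤ 1 * |Θ τ (θ+2*π) - (Θ τ θ + 2*π)| :=
            mul_le_mul_of_nonneg_right h2 (abs_nonneg _)
        _ = 1 * ‖(fun τ => Θ τ (θ+2*π) - (Θ τ θ + 2*π)) τ‖ + 0 := by
            simp [Real.norm_eq_abs])
  have := key t ⟨ht, le_refl t⟩
  rw [Real.norm_eq_abs, gronwallBound_ε0] at this
  have h0 : |Θ t (θ+2*π) - (Θ t θ + 2*π)| ≤ 0 := by simpa using this
  have := abs_nonpos_iff.mp h0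
  linarith [sub_eq_zero.mp this]

/-- Integer version of periodicity. -/
lemma theta_periodic_int (k : ℤ) (θ : ℝ) {t : ℝ} (ht : 0 ≤ t) :
    Θ t (θ + 2*π*k) = Θ t θ + 2*π*k := by
  induction k using Int.induction_on with
  | zero => simp
  | succ n ih =>
      have : θ + 2*π*((n:ℤ)+1:ℤ) = (θ + 2*π*(n:ℤ)) + 2*π := by push_cast; ring
      rw [this, theta_periodic (Θ := Θ) (z := z) hz hinit hode _ ht, ih]
      push_cast; ring
  | pred n ih =>
      have h1 : θ + 2*π*(-(n:ℤ)-1:ℤ) + 2*π = θ + 2*π*(-(n:ℤ):ℤ) := by push_cast; ring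
      have := theta_periodic (Θ := Θ) (z := z) hz hinit hode (θ + 2*π*(-(n:ℤ)-1:ℤ)) ht
      rw [h1, ih] at this
      push_cast at this ⊢
      linarith


/-- Characteristics are Lipschitz (hence continuous) in the phase variable. -/
lemma theta_cont_phase {t : ℝ} (ht : 0 ≤ t) : Continuous (fun θ => Θ t θ) := by
  have hlip : LipschitzWith (Real.toNNReal (Real.exp t)) (fun θ => Θ t θ) := by
    apply LipschitzWith.of_dist_le_mul
    intro a b
    rw [Real.dist_eq, Real.dist_eq, Real.coe_toNNReal _ (Real.exp_nonneg t)]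
    have := theta_dist_le (Θ := Θ) (z := z) hz hinit hode a b (le_refl 0) ht
    simpa [hinit, sub_zero] using this
  exact hlip.continuous

lemma P_integrable {t : ℝ} (ht : 0 ≤ t) :
    Integrable (fun θ => Complex.exp (Complex.I * ((Θ t θ : ℝ):ℂ))) ρ₀ := by
  have hc : Continuous (fun θ => Complex.exp (Complex.I * ((Θ t θ : ℝ):ℂ))) :=
    Complex.continuous_exp.comp (continuous_const.mul
      (Complex.continuous_ofReal.comp (theta_cont_phase (z := z) hz hinit hode ht)))
  apply Integrable.mono' (integrable_const (1:ℝ)) hc.aestronglyMeasurable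
  filter_upwards with θ
  rw [abs_exp_I_mul]

lemma V_cont_phase {t : ℝ} (ht : 0 ≤ t) : Continuous (fun θ => V Θ z t θ) := by
  unfold V
  exact (Complex.continuous_im.comp ((Complex.continuous_exp.comp (continuous_const.mul
      (Complex.continuous_ofReal.comp (theta_cont_phase (z := z) hz hinit hode ht)))).mul
    continuous_const)).neg

lemma V_integrable {t : ℝ} (ht : 0 ≤ t) : Integrable (fun θ => V Θ z t θ) ρ₀ := by
  apply Integrable.mono' (integrable_const (1:ℝ))
    (V_cont_phase (z := z) hz hinit hode ht).aestronglyMeasurable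
  filter_upwards with θ
  exact le_trans (V_bound t θ) (zabs_le (Θ := Θ) hz t)

/-- `z` is `1`-Lipschitz on `[0,∞)`. -/
lemma z_lip {s t : ℝ} (hs : 0 ≤ s) (ht : 0 ≤ t) :
    ‖z t - z s‖ ≤ |t - s| := by
  have key : ∀ {s t : ℝ}, 0 ≤ s → s ≤ t → ‖z t - z s‖ ≤ |t - s| := by
    intro s t hs hst
    rw [hz t, hz s, ← integral_sub (P_integrable (z := z) hz hinit hode (le_trans hs hst))
      (P_integrable (z := z) hz hinit hode hs)]
    calc ‖∫ θ, (Complex.exp (Complex.I * ((Θ t θ : ℝ):ℂ))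
          - Complex.exp (Complex.I * ((Θ s θ : ℝ):ℂ))) ∂ρ₀‖
        = ‖∫ θ, (Complex.exp (Complex.I * ((Θ t θ : ℝ):ℂ))
          - Complex.exp (Complex.I * ((Θ s θ : ℝ):ℂ))) ∂ρ₀‖ := rfl
      _ ≤ ∫ θ, ‖Complex.exp (Complex.I * ((Θ t θ : ℝ):ℂ))
          - Complex.exp (Complex.I * ((Θ s θ : ℝ):ℂ))‖ ∂ρ₀ := norm_integral_le_integral_norm _
      _ ≤ ∫ (_ : ℝ), (t - s) ∂ρ₀ := by
          apply integral_mono_of_nonneg (ae_of_all _ (fun θ => norm_nonneg _))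
            (integrable_const _)
          filter_upwards with θ
          calc ‖Complex.exp (Complex.I * ((Θ t θ : ℝ):ℂ))
              - Complex.exp (Complex.I * ((Θ s θ : ℝ):ℂ))‖ ≤ |Θ t θ - Θ s θ| :=
              exp_I_lipschitz _ _
            _ ≤ t - s := theta_time_lip (Θ := Θ) (z := z) hz hinit hode θ hs hst
      _ = t - s := by simp
      _ ≤ |t - s| := le_abs_self _
  rcases le_total s t with h | h
  · exact key hs h
  · rw [abs_sub_comm]
    calc ‖z t - z s‖ = ‖z s - z t‖ := by
          rw [← norm_neg, neg_sub]
      _ ≤ |s - t| := key ht h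

lemma z_contOn : ContinuousOn z (Ici 0) := by
  intro s hs
  apply Metric.continuousWithinAt_iff.mpr
  intro ε hε
  refine ⟨ε, hε, fun {t} htmem hdist => ?_⟩
  have := z_lip (Θ := Θ) hz hinit hode (mem_Ici.mp hs) htmem
  rw [Complex.dist_eq]
  calc ‖z t - z s‖ ≤ |t - s| := this
    _ < ε := by rwa [Real.dist_eq] at hdist


/-- Derivative of `z` via differentiation under the integral sign. -/
lemma hasDerivAt_z {t₀ : ℝ} (ht₀ : 0 < t₀) :
    HasDerivAt z (∫ θ, Complex.exp (Complex.I * ((Θ t₀ θ : ℝ):ℂ))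
      * (Complex.I * ((V Θ z t₀ θ : ℝ):ℂ)) ∂ρ₀) t₀ := by
  have hball : ∀ x ∈ Metric.ball t₀ (t₀/2), (0:ℝ) ≤ x := by
    intro x hx
    rw [Metric.mem_ball, Real.dist_eq, abs_sub_lt_iff] at hx
    linarith [hx.2]
  have key := hasDerivAt_integral_of_dominated_loc_of_deriv_le (μ := ρ₀) (𝕜 := ℝ)
    (F := fun t θ => Complex.exp (Complex.I * ((Θ t θ : ℝ):ℂ)))
    (F' := fun t θ => Complex.exp (Complex.I * ((Θ t θ : ℝ):ℂ))
      * (Complex.I * ((V Θ z t θ : ℝ):ℂ)))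
    (x₀ := t₀) (bound := fun _ => 1) (s := Metric.ball t₀ (t₀/2)) (Metric.ball_mem_nhds _ (by linarith))
    ?_ (P_integrable (z := z) hz hinit hode ht₀.le) ?_ ?_ (integrable_const 1) ?_
  · exact key.2.congr_of_eventuallyEq (Filter.Eventually.of_forall fun t => hz t)
  · filter_upwards [Ioi_mem_nhds ht₀] with x hx
    exact (P_integrable (z := z) hz hinit hode (le_of_lt hx)).aestronglyMeasurable
  · apply Continuous.aestronglyMeasurable
    exact (Complex.continuous_exp.comp (continuous_const.mul
        (Complex.continuous_ofReal.comp (theta_cont_phase (z := z) hz hinit hode ht₀.le)))).mul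
      (continuous_const.mul
        (Complex.continuous_ofReal.comp (V_cont_phase (z := z) hz hinit hode ht₀.le)))
  · filter_upwards with θ
    intro x hx
    rw [norm_mul, abs_exp_I_mul, one_mul, norm_mul, Complex.norm_I, one_mul,
      Complex.norm_real, Real.norm_eq_abs]
    exact le_trans (V_bound x θ) (zabs_le (Θ := Θ) hz x)
  · filter_upwards with θ
    intro x hx
    have h1 : HasDerivAt (fun s => Θ s θ) (V Θ z x θ) x := hode θ x (hball x hx)
    have h2 : HasDerivAt (fun s => ((Θ s θ : ℝ):ℂ)) ((V Θ z x θ : ℝ):ℂ) x := h1.ofReal_comp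
    have h3 : HasDerivAt (fun s => Complex.I * ((Θ s θ : ℝ):ℂ))
        (Complex.I * ((V Θ z x θ : ℝ):ℂ)) x := h2.const_mul Complex.I
    exact h3.cexp

/-- Derivative of `|z|²`. -/
lemma hasDerivAt_normSq {t₀ : ℝ} (ht₀ : 0 < t₀) :
    HasDerivAt (fun t => Complex.normSq (z t)) (2 * ∫ θ, (V Θ z t₀ θ)^2 ∂ρ₀) t₀ := by
  set w : ℂ := ∫ θ, Complex.exp (Complex.I * ((Θ t₀ θ : ℝ):ℂ))
      * (Complex.I * ((V Θ z t₀ θ : ℝ):ℂ)) ∂ρ₀ with hw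
  have hz' : HasDerivAt z w t₀ := hasDerivAt_z (z := z) hz hinit hode ht₀
  have hconj : HasDerivAt (fun t => (starRingEnd ℂ) (z t)) ((starRingEnd ℂ) w) t₀ := by
    have := Complex.conjCLE.toContinuousLinearMap.hasFDerivAt (x := z t₀)
    exact this.comp_hasDerivAt t₀ hz'
  have hmul : HasDerivAt (fun t => z t * (starRingEnd ℂ) (z t))
      (w * (starRingEnd ℂ) (z t₀) + z t₀ * (starRingEnd ℂ) w) t₀ := hz'.mul hconj
  have hre : HasDerivAt (fun t => (z t * (starRingEnd ℂ) (z t)).re)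
      ((w * (starRingEnd ℂ) (z t₀) + z t₀ * (starRingEnd ℂ) w).re) t₀ :=
    by have h := (Complex.reCLM.hasFDerivAt (x := z t₀ * (starRingEnd ℂ) (z t₀))).comp_hasDerivAt t₀ hmul; exact h
  have hfun : (fun t => (z t * (starRingEnd ℂ) (z t)).re) = fun t => Complex.normSq (z t) := by
    funext t; rw [Complex.mul_conj, Complex.ofReal_re]
  rw [hfun] at hre
  -- identify the derivative value
  have hval : (w * (starRingEnd ℂ) (z t₀) + z t₀ * (starRingEnd ℂ) w).re
      = 2 * ∫ θ, (V Θ z t₀ θ)^2 ∂ρ₀ := by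
    have hconjrw : z t₀ * (starRingEnd ℂ) w = (starRingEnd ℂ) (w * (starRingEnd ℂ) (z t₀)) := by
      rw [map_mul, Complex.conj_conj, mul_comm]
    rw [hconjrw, Complex.add_re, Complex.conj_re]
    have hwz : (w * (starRingEnd ℂ) (z t₀)).re = ∫ θ, (V Θ z t₀ θ)^2 ∂ρ₀ := by
      have hint : Integrable (fun θ => Complex.exp (Complex.I * ((Θ t₀ θ : ℝ):ℂ))
          * (Complex.I * ((V Θ z t₀ θ : ℝ):ℂ)) * (starRingEnd ℂ) (z t₀)) ρ₀ := by
        apply Integrable.mono' (integrable_const (1:ℝ))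
        · apply Continuous.aestronglyMeasurable
          exact ((Complex.continuous_exp.comp (continuous_const.mul
              (Complex.continuous_ofReal.comp
                (theta_cont_phase (z := z) hz hinit hode ht₀.le)))).mul
            (continuous_const.mul (Complex.continuous_ofReal.comp
              (V_cont_phase (z := z) hz hinit hode ht₀.le)))).mul continuous_const
        · filter_upwards with θ
          rw [norm_mul, norm_mul, abs_exp_I_mul, one_mul, norm_mul,
            Complex.norm_I, one_mul, Complex.norm_real, Real.norm_eq_abs, Complex.norm_conj]
          calc |V Θ z t₀ θ| * ‖z t₀‖ ≤ 1 * 1 := by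
                apply mul_le_mul _ (zabs_le (Θ := Θ) hz t₀) (norm_nonneg _) zero_le_one
                exact le_trans (V_bound t₀ θ) (zabs_le (Θ := Θ) hz t₀)
            _ = 1 := one_mul 1
      rw [hw, ← integral_mul_const, ← RCLike.re_to_complex, ← integral_re hint]
      congr 1
      funext θ
      rw [RCLike.re_to_complex]
      have hVdef : V Θ z t₀ θ = -(Complex.exp (Complex.I * ((Θ t₀ θ:ℝ):ℂ))
          * (starRingEnd ℂ) (z t₀)).im := rfl
      set p := Complex.exp (Complex.I * ((Θ t₀ θ:ℝ):ℂ))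
      set u := z t₀
      rw [hVdef]
      simp only [Complex.mul_re, Complex.mul_im, Complex.I_re, Complex.I_im,
        Complex.ofReal_re, Complex.ofReal_im, Complex.conj_re, Complex.conj_im]
      ring
    rw [hwz]; ring
  rw [hval] at hre
  exact hre

/-- Mean of the velocity field is zero. -/
lemma V_mean_zero {t : ℝ} (ht : 0 ≤ t) : ∫ θ, V Θ z t θ ∂ρ₀ = 0 := by
  have hint : Integrable (fun θ => Complex.exp (Complex.I * ((Θ t θ:ℝ):ℂ))
      * (starRingEnd ℂ) (z t)) ρ₀ :=
    (P_integrable (z := z) hz hinit hode ht).mul_const _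
  have h1 : ∫ θ, V Θ z t θ ∂ρ₀
      = -∫ θ, (Complex.exp (Complex.I * ((Θ t θ:ℝ):ℂ)) * (starRingEnd ℂ) (z t)).im ∂ρ₀ := by
    rw [← integral_neg]; rfl
  have h2 := integral_im hint
  simp only [RCLike.im_to_complex] at h2
  have h3 : ∫ θ, Complex.exp (Complex.I * ((Θ t θ:ℝ):ℂ)) * (starRingEnd ℂ) (z t) ∂ρ₀
      = (∫ θ, Complex.exp (Complex.I * ((Θ t θ:ℝ):ℂ)) ∂ρ₀) * (starRingEnd ℂ) (z t) :=
    integral_mul_const _ _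
  rw [h1, h2, h3, ← hz t, Complex.mul_conj]
  simp


lemma normSq_mono : MonotoneOn (fun t => Complex.normSq (z t)) (Ioi 0) := by
  apply monotoneOn_of_deriv_nonneg (convex_Ioi 0)
  · intro t ht
    exact ((hasDerivAt_normSq (z := z) hz hinit hode ht).continuousAt).continuousWithinAt
  · rw [interior_Ioi]
    intro t ht
    exact (hasDerivAt_normSq (z := z) hz hinit hode ht).differentiableAt.differentiableWithinAt
  · rw [interior_Ioi]
    intro t ht
    rw [(hasDerivAt_normSq (z := z) hz hinit hode ht).deriv]
    have : 0 ≤ ∫ θ, (V Θ z t θ)^2 ∂ρ₀ := integral_nonneg (fun θ => sq_nonneg _)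
    linarith

lemma w_norm_le (t : ℝ) (ht : 0 ≤ t) :
    ‖∫ θ, Complex.exp (Complex.I * ((Θ t θ : ℝ):ℂ))
      * (Complex.I * ((V Θ z t θ : ℝ):ℂ)) ∂ρ₀‖ ≤ ‖z t‖ := by
  calc ‖∫ θ, Complex.exp (Complex.I * ((Θ t θ : ℝ):ℂ))
        * (Complex.I * ((V Θ z t θ : ℝ):ℂ)) ∂ρ₀‖
      ≤ ∫ θ, ‖Complex.exp (Complex.I * ((Θ t θ : ℝ):ℂ))
        * (Complex.I * ((V Θ z t θ : ℝ):ℂ))‖ ∂ρ₀ := norm_integral_le_integral_norm _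
    _ ≤ ∫ (_ : ℝ), ‖z t‖ ∂ρ₀ := by
        apply integral_mono_of_nonneg (ae_of_all _ (fun θ => norm_nonneg _)) (integrable_const _)
        filter_upwards with θ
        rw [norm_mul, abs_exp_I_mul, one_mul, norm_mul, Complex.norm_I,
          one_mul, Complex.norm_real, Real.norm_eq_abs]
        exact V_bound t θ
    _ = ‖z t‖ := by simp
    _ = ‖z t‖ := rfl

lemma z_ne_zero (hnonstat' : ¬ (∀ t ≥ (0:ℝ), Measure.map (Θ t) ρ₀ = ρ₀)) :
    ∀ t > (0:ℝ), z t ≠ 0 := by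
  intro t ht hzt
  apply hnonstat'
  -- z vanishes identically on [0, ∞)
  have hfwd : ∀ s ≥ t, z s = 0 := by
    intro s hs
    have key := norm_le_gronwallBound_of_norm_deriv_right_le
      (f := z) (f' := fun τ => ∫ θ, Complex.exp (Complex.I * ((Θ τ θ : ℝ):ℂ))
        * (Complex.I * ((V Θ z τ θ : ℝ):ℂ)) ∂ρ₀)
      (δ := 0) (K := 1) (ε := 0) (a := t) (b := s)
      (fun τ hτ => ((hasDerivAt_z (z := z) hz hinit hode
        (lt_of_lt_of_le ht hτ.1)).continuousAt).continuousWithinAt)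
      (fun τ hτ => (hasDerivAt_z (z := z) hz hinit hode
        (lt_of_lt_of_le ht hτ.1)).hasDerivWithinAt)
      (by rw [hzt]; simp)
      (fun τ hτ => by
        have := w_norm_le (z := z) hz hinit hode τ (le_trans ht.le hτ.1)
        calc ‖∫ θ, Complex.exp (Complex.I * ((Θ τ θ : ℝ):ℂ))
            * (Complex.I * ((V Θ z τ θ : ℝ):ℂ)) ∂ρ₀‖ ≤ ‖z τ‖ := this
          _ = 1 * ‖z τ‖ + 0 := by ring)
    have := key s ⟨hs, le_refl s⟩
    rw [gronwallBound_ε0] at this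
    simp only [zero_mul] at this
    have h0 : ‖z s‖ ≤ 0 := this
    rwa [norm_le_zero_iff] at h0
  have hall : ∀ s > (0:ℝ), z s = 0 := by
    intro s hs
    rcases le_total t s with h | h
    · exact hfwd s h
    · have h1' := normSq_mono (z := z) hz hinit hode (mem_Ioi.mpr hs) (mem_Ioi.mpr ht) h
      have h1 : Complex.normSq (z s) ≤ Complex.normSq (z t) := h1'
      rw [hzt] at h1
      simp only [map_zero] at h1
      have h2 : Complex.normSq (z s) = 0 :=
        le_antisymm h1 (Complex.normSq_nonneg _)
      exact Complex.normSq_eq_zero.mp h2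
  have hzero : ∀ s ≥ (0:ℝ), z s = 0 := by
    intro s hs
    rcases eq_or_lt_of_le hs with h | h
    · -- s = 0 : use continuity from the right
      subst h
      have hcw : Tendsto z (nhdsWithin 0 (Ioi 0)) (nhds (z 0)) :=
        ((z_contOn (Θ := Θ) hz hinit hode 0 (mem_Ici.mpr (le_refl 0))).mono Ioi_subset_Ici_self)
      have hcz : Tendsto z (nhdsWithin 0 (Ioi 0)) (nhds 0) := by
        apply Tendsto.congr' _ tendsto_const_nhds
        filter_upwards [self_mem_nhdsWithin] with x hx
        exact (hall x hx).symm
      exact tendsto_nhds_unique hcw hcz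
    · exact hall s h
  -- characteristics are frozen
  intro s hs
  have hTheta : ∀ θ, Θ s θ = θ := by
    intro θ
    have key := norm_le_gronwallBound_of_norm_deriv_right_le
      (f := fun τ => Θ τ θ - θ) (f' := fun _ => (0:ℝ))
      (δ := 0) (K := 0) (ε := 0) (a := 0) (b := s)
      (fun τ hτ => (((hode θ τ hτ.1).sub_const θ).continuousAt).continuousWithinAt)
      (fun τ hτ => by
        have h := hode θ τ hτ.1
        rw [hzero τ hτ.1] at h
        simp only [map_zero, mul_zero, Complex.zero_im, neg_zero] at h
        exact (h.sub_const θ).hasDerivWithinAt)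
      (by simp [hinit])
      (fun τ hτ => by simp)
    have := key s ⟨hs, le_refl s⟩
    rw [gronwallBound_K0] at this
    simp only [Real.norm_eq_abs, zero_add, zero_mul] at this
    have := abs_nonpos_iff.mp this
    linarith [sub_eq_zero.mp this]
  have : Θ s = fun θ => θ := funext hTheta
  rw [this, Measure.map_id']

lemma Vsq_integrable {t : ℝ} (ht : 0 ≤ t) : Integrable (fun θ => (V Θ z t θ)^2) ρ₀ := by
  apply Integrable.mono' (integrable_const (1:ℝ))
    (((V_cont_phase (z := z) hz hinit hode ht).pow 2).aestronglyMeasurable)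
  filter_upwards with θ
  have h1 : |V Θ z t θ| ≤ 1 := le_trans (V_bound t θ) (zabs_le (Θ := Θ) hz t)
  rw [Real.norm_eq_abs, Pi.pow_apply, abs_pow]
  calc |V Θ z t θ|^2 ≤ 1^2 := by nlinarith [abs_nonneg (V Θ z t θ)]
    _ = 1 := one_pow 2


lemma V_cont_time (θ : ℝ) : ContinuousOn (fun t => V Θ z t θ) (Ici 0) := by
  unfold V
  intro t₀ ht₀
  have hΘ : ContinuousWithinAt (fun t => Θ t θ) (Ici 0) t₀ :=
    ((hode θ t₀ ht₀).continuousAt).continuousWithinAt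
  have hzc : ContinuousWithinAt z (Ici 0) t₀ := z_contOn (Θ := Θ) hz hinit hode t₀ ht₀
  have hmul : ContinuousWithinAt
      (fun t => Complex.exp (Complex.I * ((Θ t θ:ℝ):ℂ)) * (starRingEnd ℂ) (z t)) (Ici 0) t₀ := by
    apply ContinuousWithinAt.mul
    · exact Complex.continuous_exp.continuousAt.comp_continuousWithinAt
        (continuousWithinAt_const.mul
          (Complex.continuous_ofReal.continuousAt.comp_continuousWithinAt hΘ))
    · exact Complex.continuous_conj.continuousAt.comp_continuousWithinAt hzc
  exact (Complex.continuous_im.continuousAt.comp_continuousWithinAt hmul).neg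

lemma h_contOn : ContinuousOn (fun t => ∫ θ, (V Θ z t θ)^2 ∂ρ₀) (Ici 0) := by
  intro t₀ ht₀
  apply continuousWithinAt_of_dominated (bound := fun _ => (1:ℝ))
  · filter_upwards [self_mem_nhdsWithin] with x hx
    exact ((V_cont_phase (z := z) hz hinit hode (mem_Ici.mp hx)).pow 2).aestronglyMeasurable
  · filter_upwards [self_mem_nhdsWithin] with x hx
    filter_upwards with θ
    have h1 : |V Θ z x θ| ≤ 1 :=
      le_trans (V_bound x θ) (zabs_le (Θ := Θ) hz x)
    rw [Real.norm_eq_abs, abs_pow]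
    calc |V Θ z x θ|^2 ≤ 1^2 := by nlinarith [abs_nonneg (V Θ z x θ)]
      _ = 1 := one_pow 2
  · exact integrable_const 1
  · filter_upwards with θ
    exact ((V_cont_time (z := z) hz hinit hode θ t₀ ht₀).pow 2)

lemma energy_integrableOn :
    IntegrableOn (fun t => ∫ θ, (V Θ z t θ)^2 ∂ρ₀) (Ioi 1) (volume : Measure ℝ) := by
  set h : ℝ → ℝ := fun t => ∫ θ, (V Θ z t θ)^2 ∂ρ₀ with hh
  have hnn : ∀ t, 0 ≤ h t := fun t => integral_nonneg (fun θ => sq_nonneg _)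
  have hcont : ContinuousOn h (Ici 0) := h_contOn (z := z) hz hinit hode
  have hFTC : ∀ T, 1 ≤ T → ∫ t in (1:ℝ)..T, h t ≤ 1/2 := by
    intro T hT
    have huIcc : uIcc (1:ℝ) T = Icc 1 T := uIcc_of_le hT
    have hderiv : ∀ x ∈ uIcc (1:ℝ) T,
        HasDerivAt (fun t => Complex.normSq (z t)) (2 * h x) x := by
      intro x hx
      rw [huIcc] at hx
      exact hasDerivAt_normSq (z := z) hz hinit hode (lt_of_lt_of_le one_pos hx.1)
    have hii : IntervalIntegrable (fun t => 2 * h t) volume 1 T := by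
      apply ContinuousOn.intervalIntegrable
      rw [huIcc]
      exact (continuousOn_const.mul (hcont.mono (fun x hx => le_trans zero_le_one hx.1)))
    have heq := intervalIntegral.integral_eq_sub_of_hasDerivAt hderiv hii
    have h2 : ∫ t in (1:ℝ)..T, 2 * h t = 2 * ∫ t in (1:ℝ)..T, h t :=
      intervalIntegral.integral_const_mul 2 h
    have hb1 : Complex.normSq (z T) ≤ 1 := by
      rw [Complex.normSq_eq_norm_sq]
      calc ‖z T‖^2 ≤ 1^2 := by
            nlinarith [norm_nonneg (z T), zabs_le (Θ := Θ) hz T]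
        _ = 1 := one_pow 2
    have hb2 : 0 ≤ Complex.normSq (z 1) := Complex.normSq_nonneg _
    rw [h2] at heq
    linarith
  apply integrableOn_Ioi_of_intervalIntegral_norm_bounded (I := (1:ℝ)) (a := (1:ℝ))
    (b := fun n : ℕ => (n:ℝ)) (l := atTop) (f := h) (μ := volume)
  · intro i
    apply ContinuousOn.integrableOn_Icc (hcont.mono (fun x hx => le_trans zero_le_one hx.1))
      |>.mono_set Ioc_subset_Icc_self
  · exact tendsto_natCast_atTop_atTop
  · filter_upwards [eventually_ge_atTop 1] with n hn
    have hn1 : (1:ℝ) ≤ (n:ℝ) := by exact_mod_cast hn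
    have : ∫ x in (1:ℝ)..(n:ℝ), ‖h x‖ = ∫ x in (1:ℝ)..(n:ℝ), h x := by
      congr 1
      funext x
      rw [Real.norm_of_nonneg (hnn x)]
    rw [this]
    linarith [hFTC (n:ℝ) hn1]


/-- The time-shifted velocity `W t θ = V (max t 1) θ` is jointly strongly measurable. -/
lemma W_uncurry_meas :
    StronglyMeasurable (Function.uncurry (fun t θ => V Θ z (max t 1) θ)) := by
  apply stronglyMeasurable_uncurry_of_continuous_of_stronglyMeasurable
  · intro θ
    have hmax : Continuous (fun t : ℝ => max t 1) := continuous_id.max continuous_const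
    have hmem : ∀ t : ℝ, max t 1 ∈ Ici (0:ℝ) := fun t =>
      mem_Ici.mpr (le_trans zero_le_one (le_max_right t 1))
    exact (V_cont_time (z := z) hz hinit hode θ).comp_continuous hmax hmem
  · intro t
    exact (V_cont_phase (z := z) hz hinit hode
      (le_trans zero_le_one (le_max_right t 1))).stronglyMeasurable

/-- Almost every oscillator has square-integrable velocity. -/
lemma ae_energy_finite :
    ∀ᵐ θ ∂ρ₀, IntegrableOn (fun t => (V Θ z t θ)^2) (Ioi 1) (volume : Measure ℝ) := by
  set W : ℝ → ℝ → ℝ := fun t θ => V Θ z (max t 1) θ with hW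
  have hWmeas : Measurable (Function.uncurry W) :=
    (W_uncurry_meas (z := z) hz hinit hode).measurable
  have hJmeas : Measurable (fun p : ℝ × ℝ => ENNReal.ofReal ((Function.uncurry W p)^2)) :=
    ENNReal.measurable_ofReal.comp (hWmeas.pow_const 2)
  -- Tonelli
  have hswap := lintegral_lintegral_swap (μ := (volume : Measure ℝ).restrict (Ioi 1)) (ν := ρ₀)
    (f := fun t θ => ENNReal.ofReal ((W t θ)^2)) hJmeas.aemeasurable
  -- the iterated integral (t first) is finite
  have hfin : (∫⁻ t in Ioi (1:ℝ), ∫⁻ θ, ENNReal.ofReal ((W t θ)^2) ∂ρ₀) ≠ ⊤ := by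
    have heq1 : ∀ t : ℝ, (∫⁻ θ, ENNReal.ofReal ((W t θ)^2) ∂ρ₀)
        = ENNReal.ofReal (∫ θ, (W t θ)^2 ∂ρ₀) := by
      intro t
      rw [ofReal_integral_eq_lintegral_ofReal
        (Vsq_integrable (z := z) hz hinit hode (le_trans zero_le_one (le_max_right t 1)))
        (ae_of_all _ (fun θ => sq_nonneg _))]
    have heq2 : (∫⁻ t in Ioi (1:ℝ), ∫⁻ θ, ENNReal.ofReal ((W t θ)^2) ∂ρ₀)
        = ∫⁻ t in Ioi (1:ℝ), ENNReal.ofReal (∫ θ, (V Θ z t θ)^2 ∂ρ₀) := by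
      apply setLIntegral_congr_fun measurableSet_Ioi
      intro t ht
      simp only
      rw [heq1 t, hW]
      simp only [max_eq_left (le_of_lt (mem_Ioi.mp ht))]
    rw [heq2, ← ofReal_integral_eq_lintegral_ofReal
      (energy_integrableOn (z := z) hz hinit hode)
      (ae_of_all _ (fun t => integral_nonneg (fun θ => sq_nonneg _)))]
    exact ENNReal.ofReal_ne_top
  rw [hswap] at hfin
  have hmeas2 : Measurable (fun θ => ∫⁻ t in Ioi (1:ℝ), ENNReal.ofReal ((W t θ)^2)) := by
    exact Measurable.lintegral_prod_left' (f := fun p : ℝ × ℝ =>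
      ENNReal.ofReal ((W p.1 p.2)^2)) hJmeas
  have hae := ae_lt_top hmeas2 hfin
  filter_upwards [hae] with θ hθ
  -- convert to IntegrableOn for V
  have hWint : IntegrableOn (fun t => (W t θ)^2) (Ioi 1) volume := by
    constructor
    · apply ContinuousOn.aestronglyMeasurable _ measurableSet_Ioi
      apply Continuous.continuousOn
      have hmax : Continuous (fun t : ℝ => max t 1) := continuous_id.max continuous_const
      have hmem : ∀ t : ℝ, max t 1 ∈ Ici (0:ℝ) := fun t =>
        mem_Ici.mpr (le_trans zero_le_one (le_max_right t 1))
      exact ((V_cont_time (z := z) hz hinit hode θ).comp_continuous hmax hmem).pow 2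
    · rw [HasFiniteIntegral]
      have : ∀ t : ℝ, ‖(W t θ)^2‖ₑ = ENNReal.ofReal ((W t θ)^2) := fun t =>
        Real.enorm_eq_ofReal (sq_nonneg _)
      rw [lintegral_congr (fun t => this t)]
      exact hθ
  apply hWint.congr
  rw [EventuallyEq, ae_restrict_iff' measurableSet_Ioi]
  filter_upwards with t ht
  rw [hW]
  simp only [max_eq_left (le_of_lt (mem_Ioi.mp ht))]

/-- Almost every oscillator velocity tends to zero. -/
lemma ae_V_tendsto_zero :
    ∀ᵐ θ ∂ρ₀, Tendsto (fun t => V Θ z t θ) atTop (nhds 0) := by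
  filter_upwards [ae_energy_finite (z := z) hz hinit hode] with θ hθ
  apply tendsto_zero_of_sq_integrable_of_lip _ hθ
  intro s hs t ht
  -- |V t θ - V s θ| ≤ 2 |t - s|
  have key : ∀ {s t : ℝ}, 0 ≤ s → s ≤ t → |V Θ z t θ - V Θ z s θ| ≤ 2 * |t - s| := by
    intro s t hs hst
    have hsplit : V Θ z t θ - V Θ z s θ
        = -(((Complex.exp (Complex.I * ((Θ t θ:ℝ):ℂ)) - Complex.exp (Complex.I * ((Θ s θ:ℝ):ℂ)))
            * (starRingEnd ℂ) (z t)
          + Complex.exp (Complex.I * ((Θ s θ:ℝ):ℂ)) * ((starRingEnd ℂ) (z t)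
            - (starRingEnd ℂ) (z s))).im) := by
      unfold V
      simp only [sub_mul, mul_sub, Complex.add_im, Complex.sub_im]
      ring
    rw [hsplit, abs_neg]
    calc |(((Complex.exp (Complex.I * ((Θ t θ:ℝ):ℂ)) - Complex.exp (Complex.I * ((Θ s θ:ℝ):ℂ)))
            * (starRingEnd ℂ) (z t)
          + Complex.exp (Complex.I * ((Θ s θ:ℝ):ℂ)) * ((starRingEnd ℂ) (z t)
            - (starRingEnd ℂ) (z s))).im)|
        ≤ ‖(Complex.exp (Complex.I * ((Θ t θ:ℝ):ℂ))
            - Complex.exp (Complex.I * ((Θ s θ:ℝ):ℂ))) * (starRingEnd ℂ) (z t)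
          + Complex.exp (Complex.I * ((Θ s θ:ℝ):ℂ)) * ((starRingEnd ℂ) (z t)
            - (starRingEnd ℂ) (z s))‖ := Complex.abs_im_le_norm _
      _ ≤ ‖(Complex.exp (Complex.I * ((Θ t θ:ℝ):ℂ))
            - Complex.exp (Complex.I * ((Θ s θ:ℝ):ℂ))) * (starRingEnd ℂ) (z t)‖
          + ‖Complex.exp (Complex.I * ((Θ s θ:ℝ):ℂ)) * ((starRingEnd ℂ) (z t)
            - (starRingEnd ℂ) (z s))‖ := norm_add_le _ _
      _ ≤ |t - s| + |t - s| := by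
          apply add_le_add
          · rw [norm_mul, Complex.norm_conj]
            calc ‖Complex.exp (Complex.I * ((Θ t θ:ℝ):ℂ))
                  - Complex.exp (Complex.I * ((Θ s θ:ℝ):ℂ))‖ * ‖z t‖
                ≤ |Θ t θ - Θ s θ| * 1 := by
                  apply mul_le_mul (exp_I_lipschitz _ _) (zabs_le (Θ := Θ) hz t)
                    (norm_nonneg _) (abs_nonneg _)
              _ = |Θ t θ - Θ s θ| := mul_one _
              _ ≤ t - s := theta_time_lip (Θ := Θ) (z := z) hz hinit hode θ hs hst
              _ ≤ |t - s| := le_abs_self _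
          · rw [norm_mul, abs_exp_I_mul, one_mul, ← map_sub, Complex.norm_conj]
            exact z_lip (Θ := Θ) hz hinit hode hs (le_trans hs hst)
      _ = 2 * |t - s| := by ring
  rcases le_total s t with h | h
  · exact key hs h
  · rw [abs_sub_comm (V Θ z t θ), abs_sub_comm t s]
    exact key ht h


lemma E_contOn (θ θ₀ : ℝ) : ContinuousOn (fun t => Θ t θ - Θ t θ₀) (Ici 0) :=
  fun t₀ ht₀ => (((hode θ t₀ ht₀).sub (hode θ₀ t₀ ht₀)).continuousAt).continuousWithinAt

lemma sinE_tendsto (hnonstat' : ¬ (∀ t ≥ (0:ℝ), Measure.map (Θ t) ρ₀ = ρ₀)) (θ₀ θ : ℝ)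
    (h0 : Tendsto (fun t => V Θ z t θ₀) atTop (nhds 0))
    (h1 : Tendsto (fun t => V Θ z t θ) atTop (nhds 0)) :
    Tendsto (fun t => Real.sin (Θ t θ - Θ t θ₀)) atTop (nhds 0) := by
  have hz1 : z 1 ≠ 0 := z_ne_zero (z := z) hz hinit hode hnonstat' 1 one_pos
  have hn1 : 0 < Complex.normSq (z 1) := Complex.normSq_pos.mpr hz1
  apply squeeze_zero_norm' (a := fun t => (|V Θ z t θ| + |V Θ z t θ₀|) / Complex.normSq (z 1))
  · filter_upwards [eventually_ge_atTop (1:ℝ)] with t ht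
    have hns : Complex.normSq (z 1) ≤ Complex.normSq (z t) :=
      normSq_mono (z := z) hz hinit hode (mem_Ioi.mpr one_pos)
        (mem_Ioi.mpr (lt_of_lt_of_le one_pos ht)) ht
    have hid := sin_identity (Θ t θ) (Θ t θ₀) (z t)
    have hVθ : V Θ z t θ = -(Complex.exp (Complex.I*((Θ t θ:ℝ):ℂ)) * (starRingEnd ℂ) (z t)).im :=
      rfl
    have hVθ₀ : V Θ z t θ₀
        = -(Complex.exp (Complex.I*((Θ t θ₀:ℝ):ℂ)) * (starRingEnd ℂ) (z t)).im := rfl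
    have hre1 : |(Complex.exp (Complex.I*((Θ t θ:ℝ):ℂ)) * (starRingEnd ℂ) (z t)).re| ≤ 1 := by
      calc |(Complex.exp (Complex.I*((Θ t θ:ℝ):ℂ)) * (starRingEnd ℂ) (z t)).re|
          ≤ ‖Complex.exp (Complex.I*((Θ t θ:ℝ):ℂ)) * (starRingEnd ℂ) (z t)‖ :=
            Complex.abs_re_le_norm _
        _ = ‖z t‖ := by rw [norm_mul, abs_exp_I_mul, Complex.norm_conj, one_mul]
        _ ≤ 1 := zabs_le (Θ := Θ) hz t
    have hre2 : |(Complex.exp (Complex.I*((Θ t θ₀:ℝ):ℂ)) * (starRingEnd ℂ) (z t)).re| ≤ 1 := by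
      calc |(Complex.exp (Complex.I*((Θ t θ₀:ℝ):ℂ)) * (starRingEnd ℂ) (z t)).re|
          ≤ ‖Complex.exp (Complex.I*((Θ t θ₀:ℝ):ℂ)) * (starRingEnd ℂ) (z t)‖ :=
            Complex.abs_re_le_norm _
        _ = ‖z t‖ := by rw [norm_mul, abs_exp_I_mul, Complex.norm_conj, one_mul]
        _ ≤ 1 := zabs_le (Θ := Θ) hz t
    have hkey : |Real.sin (Θ t θ - Θ t θ₀)| * Complex.normSq (z 1)
        ≤ |V Θ z t θ| + |V Θ z t θ₀| := by
      have hstep : |Real.sin (Θ t θ - Θ t θ₀)| * Complex.normSq (z t)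
          ≤ |V Θ z t θ| + |V Θ z t θ₀| := by
        rw [← abs_of_nonneg (Complex.normSq_nonneg (z t)), ← abs_mul, hid]
        rw [← hVθ, ← hVθ₀]
        calc |V Θ z t θ₀ * (Complex.exp (Complex.I*((Θ t θ:ℝ):ℂ)) * (starRingEnd ℂ) (z t)).re
            - V Θ z t θ * (Complex.exp (Complex.I*((Θ t θ₀:ℝ):ℂ)) * (starRingEnd ℂ) (z t)).re|
            ≤ |V Θ z t θ₀ * (Complex.exp (Complex.I*((Θ t θ:ℝ):ℂ)) * (starRingEnd ℂ) (z t)).re|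
            + |V Θ z t θ * (Complex.exp (Complex.I*((Θ t θ₀:ℝ):ℂ)) * (starRingEnd ℂ) (z t)).re| :=
              abs_sub _ _
          _ ≤ |V Θ z t θ₀| * 1 + |V Θ z t θ| * 1 := by
              rw [abs_mul, abs_mul]
              exact add_le_add
                (mul_le_mul_of_nonneg_left hre1 (abs_nonneg _))
                (mul_le_mul_of_nonneg_left hre2 (abs_nonneg _))
          _ = |V Θ z t θ| + |V Θ z t θ₀| := by ring
      calc |Real.sin (Θ t θ - Θ t θ₀)| * Complex.normSq (z 1)
          ≤ |Real.sin (Θ t θ - Θ t θ₀)| * Complex.normSq (z t) :=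
            mul_le_mul_of_nonneg_left hns (abs_nonneg _)
        _ ≤ |V Θ z t θ| + |V Θ z t θ₀| := hstep
    rw [Real.norm_eq_abs, le_div_iff₀ hn1]
    exact hkey
  · have := ((h1.abs.add h0.abs).div_const (Complex.normSq (z 1)))
    simpa using this

/-- Winding-normalized displacement bound. -/
lemma E_disp_bound (θ₀ θ : ℝ) {T : ℝ} (hT : 0 ≤ T) :
    |(Θ T θ - Θ T θ₀) - (θ - θ₀)| ≤ 2*π := by
  have hpi : (0:ℝ) < π := Real.pi_pos
  set k : ℤ := ⌊(θ - θ₀)/(2*π)⌋ with hk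
  set θh : ℝ := θ - 2*π*k with hθh
  have hθeq : θ = θh + 2*π*k := by rw [hθh]; ring
  have h1 : θ₀ ≤ θh := by
    have := Int.floor_le ((θ - θ₀)/(2*π))
    have h2 : (k:ℝ) * (2*π) ≤ θ - θ₀ := by
      rw [← le_div_iff₀ (by positivity : (0:ℝ) < 2*π)]
      exact this
    rw [hθh]; linarith
  have h2 : θh < θ₀ + 2*π := by
    have := Int.lt_floor_add_one ((θ - θ₀)/(2*π))
    have h3 : θ - θ₀ < ((k:ℝ) + 1) * (2*π) := by
      rw [← div_lt_iff₀ (by positivity : (0:ℝ) < 2*π)]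
      exact this
    rw [hθh]; linarith
  have hper : Θ T θ = Θ T θh + 2*π*k := by
    rw [hθeq]
    exact theta_periodic_int (Θ := Θ) (z := z) hz hinit hode k θh hT
  have hmono1 : Θ T θ₀ ≤ Θ T θh := by
    rcases eq_or_lt_of_le h1 with h | h
    · rw [h]
    · exact (theta_strict_mono (Θ := Θ) (z := z) hz hinit hode h hT).le
  have hmono2 : Θ T θh < Θ T θ₀ + 2*π := by
    have := theta_strict_mono (Θ := Θ) (z := z) hz hinit hode h2 hT
    rwa [theta_periodic (Θ := Θ) (z := z) hz hinit hode θ₀ hT] at this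
  have heq : (Θ T θ - Θ T θ₀) - (θ - θ₀) = (Θ T θh - Θ T θ₀) - (θh - θ₀) := by
    rw [hper, hθeq]; ring
  rw [heq, abs_le]
  constructor <;> nlinarith [hmono1, hmono2, h1, h2]

/-- Derivative of the recentered integral `H`. -/
lemma hasDerivAt_H (θ₀ : ℝ) {T : ℝ} (hT : 0 < T) :
    HasDerivAt (fun T => ∫ θ, ((Θ T θ - Θ T θ₀) - (θ - θ₀)) ∂ρ₀)
      (∫ θ, (V Θ z T θ - V Θ z T θ₀) ∂ρ₀) T := by
  have hball : ∀ x ∈ Metric.ball T (T/2), (0:ℝ) ≤ x := by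
    intro x hx
    rw [Metric.mem_ball, Real.dist_eq, abs_sub_lt_iff] at hx
    linarith [hx.2]
  have key := hasDerivAt_integral_of_dominated_loc_of_deriv_le (μ := ρ₀) (𝕜 := ℝ)
    (F := fun T θ => (Θ T θ - Θ T θ₀) - (θ - θ₀))
    (F' := fun T θ => V Θ z T θ - V Θ z T θ₀)
    (x₀ := T) (bound := fun _ => 2) (s := Metric.ball T (T/2)) (Metric.ball_mem_nhds _ (by linarith))
    ?_ ?_ ?_ ?_ (integrable_const 2) ?_
  · exact key.2
  · filter_upwards [Ioi_mem_nhds hT] with x hx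
    apply Continuous.aestronglyMeasurable
    exact ((theta_cont_phase (z := z) hz hinit hode (le_of_lt hx)).sub continuous_const).sub
      (continuous_id.sub continuous_const)
  · apply Integrable.mono' (integrable_const (2*π))
    · apply Continuous.aestronglyMeasurable
      exact ((theta_cont_phase (z := z) hz hinit hode hT.le).sub continuous_const).sub
        (continuous_id.sub continuous_const)
    · filter_upwards with θ
      exact E_disp_bound (Θ := Θ) (z := z) hz hinit hode θ₀ θ hT.le
  · apply Continuous.aestronglyMeasurable
    exact (V_cont_phase (z := z) hz hinit hode hT.le).sub continuous_const
  · filter_upwards with θ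
    intro x hx
    have hx0 : (0:ℝ) ≤ x := hball x hx
    rw [Real.norm_eq_abs]
    calc |V Θ z x θ - V Θ z x θ₀| ≤ |V Θ z x θ| + |V Θ z x θ₀| := abs_sub _ _
      _ ≤ 1 + 1 := add_le_add
          (le_trans (V_bound x θ) (zabs_le (Θ := Θ) hz x))
          (le_trans (V_bound x θ₀) (zabs_le (Θ := Θ) hz x))
      _ = 2 := by norm_num
  · filter_upwards with θ
    intro x hx
    exact ((hode θ x (hball x hx)).sub (hode θ₀ x (hball x hx))).sub_const _

end ODE

end Main

end KuramotoAux

open KuramotoAux in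
/-- For a non-stationary solution of the kinetic Kuramoto model of identical oscillators
in characteristics form: `z(t) ≠ 0` for all `t > 0`, `R(t) = |z(t)|` converges to some
`R* ∈ (0,1]`, and the phase `φ(t)` converges: there is `φ* ∈ ℝ` with
`z(t)/|z(t)| → e^{iφ*}` as `t → ∞`. -/
theorem kinetic_kuramoto_order_parameters_converge
    (ρ₀ : Measure ℝ) [IsProbabilityMeasure ρ₀]
    (Θ : ℝ → ℝ → ℝ) (z : ℝ → ℂ)
    (hz : ∀ t, z t = ∫ θ, Complex.exp (Complex.I * (Θ t θ : ℂ)) ∂ρ₀)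
    (hinit : ∀ θ, Θ 0 θ = θ)
    (hode : ∀ θ : ℝ, ∀ t ≥ (0:ℝ),
      HasDerivAt (fun s => Θ s θ)
        (-(Complex.exp (Complex.I * (Θ t θ : ℂ)) * (starRingEnd ℂ) (z t)).im) t)
    (hnonstat : ¬ (∀ t ≥ (0:ℝ), Measure.map (Θ t) ρ₀ = ρ₀)) :
    (∀ t > (0:ℝ), z t ≠ 0) ∧
    (∃ Rstar ∈ Set.Ioc (0:ℝ) 1,
      Tendsto (fun t => ‖z t‖) atTop (nhds Rstar)) ∧
    (∃ φstar : ℝ,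
      Tendsto (fun t => z t / (‖z t‖ : ℂ)) atTop
        (nhds (Complex.exp (Complex.I * (φstar : ℂ))))) := by
  classical
  have hzne : ∀ t > (0:ℝ), z t ≠ 0 := z_ne_zero (z := z) hz hinit hode hnonstat
  -- choose a reference oscillator with vanishing velocity
  have haeV := ae_V_tendsto_zero (z := z) hz hinit hode
  have hneBot : (ae ρ₀).NeBot := ae_neBot.mpr (IsProbabilityMeasure.ne_zero ρ₀)
  obtain ⟨θ₀, hθ₀⟩ := haeV.exists
  -- a.e. convergence of phase differences
  have hEconv : ∀ᵐ θ ∂ρ₀, ∃ L, Tendsto (fun t => Θ t θ - Θ t θ₀) atTop (nhds L) := by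
    filter_upwards [haeV] with θ hθ
    exact tendsto_of_sin_tendsto (E_contOn (z := z) hz hinit hode θ θ₀)
      (sinE_tendsto (z := z) hz hinit hode hnonstat θ₀ θ hθ₀ hθ)
  set ℓ : ℝ → ℝ := fun θ =>
    if h : ∃ L, Tendsto (fun t => Θ t θ - Θ t θ₀) atTop (nhds L) then h.choose else 0 with hℓdef
  have hℓ : ∀ᵐ θ ∂ρ₀, Tendsto (fun t => Θ t θ - Θ t θ₀) atTop (nhds (ℓ θ)) := by
    filter_upwards [hEconv] with θ hθ
    rw [hℓdef]
    simp only [dif_pos hθ]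
    exact hθ.choose_spec
  -- the recentered mean H and its constancy combination with c
  set H : ℝ → ℝ := fun T => ∫ θ, ((Θ T θ - Θ T θ₀) - (θ - θ₀)) ∂ρ₀ with hHdef
  have hKconst : ∀ T ≥ (1:ℝ), Θ T θ₀ + H T = Θ 1 θ₀ + H 1 := by
    intro T hT
    have key := constant_of_has_deriv_right_zero (f := fun T => Θ T θ₀ + H T) (a := 1) (b := T)
      ?_ ?_
    · exact key T ⟨hT, le_refl T⟩
    · intro x hx
      have hx0 : (0:ℝ) < x := lt_of_lt_of_le one_pos hx.1
      exact (((hode θ₀ x hx0.le).add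
        (hasDerivAt_H (z := z) hz hinit hode θ₀ hx0)).continuousAt).continuousWithinAt
    · intro x hx
      have hx0 : (0:ℝ) < x := lt_of_lt_of_le one_pos hx.1
      have hd := (hode θ₀ x hx0.le).add (hasDerivAt_H (z := z) hz hinit hode θ₀ hx0)
      have hval : V Θ z x θ₀ + ∫ θ, (V Θ z x θ - V Θ z x θ₀) ∂ρ₀ = 0 := by
        rw [integral_sub (V_integrable (z := z) hz hinit hode hx0.le) (integrable_const _),
          V_mean_zero (z := z) hz hinit hode hx0.le, integral_const]
        simp
      have hd0 : HasDerivAt (fun T => Θ T θ₀ + H T) 0 x := by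
        have : V Θ z x θ₀ + ∫ θ, (V Θ z x θ - V Θ z x θ₀) ∂ρ₀ = 0 := hval
        rw [← this]
        exact hd
      exact hd0.hasDerivWithinAt
  -- H converges
  have hHtend : Tendsto H atTop (nhds (∫ θ, (ℓ θ - (θ - θ₀)) ∂ρ₀)) := by
    apply tendsto_integral_filter_of_dominated_convergence (bound := fun _ => 2*π)
    · filter_upwards [eventually_ge_atTop (0:ℝ)] with T hT
      apply Continuous.aestronglyMeasurable
      exact ((theta_cont_phase (z := z) hz hinit hode hT).sub continuous_const).sub
        (continuous_id.sub continuous_const)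
    · filter_upwards [eventually_ge_atTop (0:ℝ)] with T hT
      filter_upwards with θ
      rw [Real.norm_eq_abs]
      exact E_disp_bound (Θ := Θ) (z := z) hz hinit hode θ₀ θ hT
    · exact integrable_const _
    · filter_upwards [hℓ] with θ hθ
      exact hθ.sub_const (θ - θ₀)
  -- c converges
  set climit : ℝ := Θ 1 θ₀ + H 1 - ∫ θ, (ℓ θ - (θ - θ₀)) ∂ρ₀ with hclimitdef
  have hctend : Tendsto (fun T => Θ T θ₀) atTop (nhds climit) := by
    have h1 : Tendsto (fun T => Θ 1 θ₀ + H 1 - H T) atTop (nhds climit) := by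
      rw [hclimitdef]
      exact tendsto_const_nhds.sub hHtend
    apply h1.congr'
    filter_upwards [eventually_ge_atTop (1:ℝ)] with T hT
    have := hKconst T hT
    linarith
  -- a.e. convergence of characteristics
  have hΘconv : ∀ᵐ θ ∂ρ₀, Tendsto (fun t => Θ t θ) atTop (nhds (climit + ℓ θ)) := by
    filter_upwards [hℓ] with θ hθ
    have := hctend.add hθ
    apply this.congr
    intro t
    ring
  -- convergence of z
  set zlim : ℂ := ∫ θ, Complex.exp (Complex.I * ((climit + ℓ θ : ℝ):ℂ)) ∂ρ₀ with hzlimdef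
  have hztend : Tendsto z atTop (nhds zlim) := by
    have key := tendsto_integral_filter_of_dominated_convergence (μ := ρ₀)
      (F := fun t θ => Complex.exp (Complex.I * ((Θ t θ : ℝ):ℂ)))
      (f := fun θ => Complex.exp (Complex.I * ((climit + ℓ θ : ℝ):ℂ)))
      (l := atTop) (bound := fun _ => 1)
      ?_ ?_ (integrable_const 1) ?_
    · exact key.congr' (Filter.Eventually.of_forall fun t => (hz t).symm)
    · filter_upwards [eventually_ge_atTop (0:ℝ)] with t ht
      exact (P_integrable (z := z) hz hinit hode ht).aestronglyMeasurable
    · filter_upwards with t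
      filter_upwards with θ
      rw [abs_exp_I_mul]
    · filter_upwards [hΘconv] with θ hθ
      have hcont : Continuous (fun x : ℝ => Complex.exp (Complex.I * ((x:ℝ):ℂ))) :=
        Complex.continuous_exp.comp (continuous_const.mul Complex.continuous_ofReal)
      exact (hcont.continuousAt.tendsto).comp hθ
  -- limit modulus
  have habs : Tendsto (fun t => ‖z t‖) atTop (nhds (‖zlim‖)) :=
    (continuous_norm.continuousAt.tendsto).comp hztend
  have hzlimne : zlim ≠ 0 := by
    have hns : Tendsto (fun t => Complex.normSq (z t)) atTop (nhds (Complex.normSq zlim)) :=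
      (Complex.continuous_normSq.continuousAt.tendsto).comp hztend
    have hev : ∀ᶠ t in atTop, Complex.normSq (z 1) ≤ Complex.normSq (z t) := by
      filter_upwards [eventually_ge_atTop (1:ℝ)] with t ht
      exact normSq_mono (z := z) hz hinit hode (mem_Ioi.mpr one_pos)
        (mem_Ioi.mpr (lt_of_lt_of_le one_pos ht)) ht
    have hle : Complex.normSq (z 1) ≤ Complex.normSq zlim := ge_of_tendsto hns hev
    have hpos : 0 < Complex.normSq (z 1) := Complex.normSq_pos.mpr (hzne 1 one_pos)
    exact Complex.normSq_pos.mp (lt_of_lt_of_le hpos hle)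
  have hRpos : 0 < ‖zlim‖ := norm_pos_iff.mpr hzlimne
  have hRle : ‖zlim‖ ≤ 1 :=
    le_of_tendsto habs (Filter.Eventually.of_forall (fun t => zabs_le (Θ := Θ) hz t))
  refine ⟨hzne, ⟨‖zlim‖, ⟨hRpos, hRle⟩, habs⟩, ?_⟩
  -- phase convergence
  set L : ℂ := zlim / ((‖zlim‖ : ℝ):ℂ) with hLdef
  have hdiv : Tendsto (fun t => z t / ((‖z t‖ : ℝ):ℂ)) atTop (nhds L) := by
    apply hztend.div ((Complex.continuous_ofReal.continuousAt.tendsto).comp habs)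
    exact Complex.ofReal_ne_zero.mpr (ne_of_gt hRpos)
  have habsL : ‖L‖ = 1 := by
    rw [hLdef, norm_div, Complex.norm_real, Real.norm_eq_abs, abs_of_pos hRpos, div_self (ne_of_gt hRpos)]
  refine ⟨L.arg, ?_⟩
  have hexp : Complex.exp (Complex.I * (L.arg : ℂ)) = L := by
    have := Complex.norm_mul_exp_arg_mul_I L
    rw [habsL] at this
    simp only [Complex.ofReal_one, one_mul] at this
    rw [mul_comm]
    exact this
  rw [hexp]
  exact hdiv
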